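/- If f is Lipschitz with constant L_f, and Z̄^(M) and Z̄^(N) are two conditionally independent averages (given X) of M and N i.i.d. samples of Z respectively, then the MLMC correction Ŷ = f(Z̄^(M)) - f(Z̄^(N)) satisfies E[Ŷ² | X] ≤ 2 L_f² (1/M + 1/N) V[Z|X]. -/

import Mathlib

open MeasureTheory ProbabilityTheory
open scoped NNReal

/-- Working under the conditional law given `X` (a probability measure `ℙ`),
let `Z (Sum.inl i)`, `i < M`, and `Z (Sum.inr j)`, `j < N`, be jointly independent i.i.d.
copies of `Z₀` with finite variance.  If `f` is `L`-Lipschitz then the MLMC correction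
`Ŷ = f(Z̄^(M)) - f(Z̄^(N))` built from the two independent sample averages satisfies
`E[Ŷ²] ≤ 2 L² (1/M + 1/N) Var[Z₀]`. -/
theorem mlmc_correction_mse_bound
    {Ω : Type*} [MeasureSpace Ω] [IsProbabilityMeasure (ℙ : Measure Ω)]
    (M N : ℕ) (hM : 0 < M) (hN : 0 < N)
    (Z : (Fin M ⊕ Fin N) → Ω → ℝ) (Z₀ : Ω → ℝ)
    (hmeas : ∀ i, Measurable (Z i)) (hmeas₀ : Measurable Z₀)
    (hident : ∀ i, IdentDistrib (Z i) Z₀ ℙ ℙ)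
    (hindep : iIndepFun Z ℙ)
    (hsq : MemLp Z₀ 2 ℙ)
    (L : ℝ≥0) (f : ℝ → ℝ) (hf : LipschitzWith L f) :
    ∫ ω, (f ((M : ℝ)⁻¹ * ∑ i, Z (Sum.inl i) ω)
          - f ((N : ℝ)⁻¹ * ∑ j, Z (Sum.inr j) ω))^2 ∂ℙ
      ≤ 2 * (L : ℝ)^2 * ((M : ℝ)⁻¹ + (N : ℝ)⁻¹) * variance Z₀ ℙ := by
  set μ0 : ℝ := ∫ ω, Z₀ ω ∂ℙ with hμ0
  have hZℒ2 : ∀ i, MemLp (Z i) 2 ℙ := fun i => (hident i).symm.memLp_snd hsq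
  -- averages
  set A : Ω → ℝ := fun ω => (M : ℝ)⁻¹ * ∑ i, Z (Sum.inl i) ω with hA
  set B : Ω → ℝ := fun ω => (N : ℝ)⁻¹ * ∑ j, Z (Sum.inr j) ω with hB
  have hA2 : MemLp A 2 ℙ := by
    have h := memLp_finset_sum' (μ := ℙ) Finset.univ (fun i _ => hZℒ2 (Sum.inl i))
    have heq : A = fun ω => (M : ℝ)⁻¹ * (∑ i, Z (Sum.inl i)) ω := by
      funext ω; simp [hA]
    rw [heq]
    exact h.const_mul _
  have hB2 : MemLp B 2 ℙ := by
    have h := memLp_finset_sum' (μ := ℙ) Finset.univ (fun j _ => hZℒ2 (Sum.inr j))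
    have heq : B = fun ω => (N : ℝ)⁻¹ * (∑ j, Z (Sum.inr j)) ω := by
      funext ω; simp [hB]
    rw [heq]
    exact h.const_mul _
  have hint : ∀ i, Integrable (Z i) ℙ := fun i =>
    (hZℒ2 i).integrable (by norm_num)
  have hZmean : ∀ i, ∫ ω, Z i ω ∂ℙ = μ0 := fun i => (hident i).integral_eq
  have hAmean : ∫ ω, A ω ∂ℙ = μ0 := by
    rw [hA]
    rw [integral_const_mul, integral_finset_sum _ (fun i _ => hint (Sum.inl i))]
    simp only [hZmean, Finset.sum_const, Finset.card_univ, Fintype.card_fin, nsmul_eq_mul]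
    field_simp
  have hBmean : ∫ ω, B ω ∂ℙ = μ0 := by
    rw [hB]
    rw [integral_const_mul, integral_finset_sum _ (fun j _ => hint (Sum.inr j))]
    simp only [hZmean, Finset.sum_const, Finset.card_univ, Fintype.card_fin, nsmul_eq_mul]
    field_simp
  have hZvar : ∀ i, variance (Z i) ℙ = variance Z₀ ℙ := fun i => (hident i).variance_eq
  have hAvar : variance A ℙ = (M : ℝ)⁻¹ * variance Z₀ ℙ := by
    have h1 : A = ((M : ℝ)⁻¹) • (∑ i, Z (Sum.inl i)) := by
      funext ω; simp [hA, Finset.sum_apply]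
    rw [h1, variance_smul,
      IndepFun.variance_sum (fun i _ => hZℒ2 (Sum.inl i))
        (fun i _ j _ hij => hindep.indepFun (by simpa using hij))]
    simp only [hZvar, Finset.sum_const, Finset.card_univ, Fintype.card_fin, nsmul_eq_mul]
    have : (M : ℝ) ≠ 0 := Nat.cast_ne_zero.2 hM.ne'
    field_simp
  have hBvar : variance B ℙ = (N : ℝ)⁻¹ * variance Z₀ ℙ := by
    have h1 : B = ((N : ℝ)⁻¹) • (∑ j, Z (Sum.inr j)) := by
      funext ω; simp [hB, Finset.sum_apply]
    rw [h1, variance_smul,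
      IndepFun.variance_sum (fun j _ => hZℒ2 (Sum.inr j))
        (fun i _ j _ hij => hindep.indepFun (by simpa using hij))]
    simp only [hZvar, Finset.sum_const, Finset.card_univ, Fintype.card_fin, nsmul_eq_mul]
    have : (N : ℝ) ≠ 0 := Nat.cast_ne_zero.2 hN.ne'
    field_simp
  -- L^2 second moments of centered averages
  have hAc : MemLp (fun ω => A ω - μ0) 2 ℙ := hA2.sub (memLp_const μ0)
  have hBc : MemLp (fun ω => B ω - μ0) 2 ℙ := hB2.sub (memLp_const μ0)
  have hAint : Integrable (fun ω => (A ω - μ0)^2) ℙ := by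
    have := hAc.integrable_sq
    simpa [pow_two] using this
  have hBint : Integrable (fun ω => (B ω - μ0)^2) ℙ := by
    have := hBc.integrable_sq
    simpa [pow_two] using this
  have hAsq : ∫ ω, (A ω - μ0)^2 ∂ℙ = (M : ℝ)⁻¹ * variance Z₀ ℙ := by
    rw [← hAvar, variance_eq_integral hA2.aestronglyMeasurable.aemeasurable, hAmean]
  have hBsq : ∫ ω, (B ω - μ0)^2 ∂ℙ = (N : ℝ)⁻¹ * variance Z₀ ℙ := by
    rw [← hBvar, variance_eq_integral hB2.aestronglyMeasurable.aemeasurable, hBmean]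
  -- pointwise bound
  have hpt : ∀ ω, (f (A ω) - f (B ω))^2
      ≤ 2 * (L : ℝ)^2 * (A ω - μ0)^2 + 2 * (L : ℝ)^2 * (B ω - μ0)^2 := by
    intro ω
    have h1 : |f (A ω) - f μ0| ≤ (L : ℝ) * |A ω - μ0| := by
      have := hf.dist_le_mul (A ω) μ0
      simpa [Real.dist_eq] using this
    have h2 : |f (B ω) - f μ0| ≤ (L : ℝ) * |B ω - μ0| := by
      have := hf.dist_le_mul (B ω) μ0
      simpa [Real.dist_eq] using this
    have habs : |f (A ω) - f (B ω)| ≤ |f (A ω) - f μ0| + |f (B ω) - f μ0| := by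
      calc |f (A ω) - f (B ω)| ≤ |f (A ω) - f μ0| + |f μ0 - f (B ω)| :=
            abs_sub_le _ _ _
        _ = |f (A ω) - f μ0| + |f (B ω) - f μ0| := by rw [abs_sub_comm (f μ0)]
    have key : (f (A ω) - f (B ω))^2 ≤ (|f (A ω) - f μ0| + |f (B ω) - f μ0|)^2 := by
      rw [← sq_abs (f (A ω) - f (B ω))]
      exact pow_le_pow_left₀ (abs_nonneg _) habs 2
    have hq1 : |f (A ω) - f μ0|^2 ≤ (L : ℝ)^2 * (A ω - μ0)^2 := by
      have := pow_le_pow_left₀ (abs_nonneg _) h1 2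
      calc |f (A ω) - f μ0|^2 ≤ ((L : ℝ) * |A ω - μ0|)^2 := this
        _ = (L : ℝ)^2 * (A ω - μ0)^2 := by rw [mul_pow, sq_abs]
    have hq2 : |f (B ω) - f μ0|^2 ≤ (L : ℝ)^2 * (B ω - μ0)^2 := by
      have := pow_le_pow_left₀ (abs_nonneg _) h2 2
      calc |f (B ω) - f μ0|^2 ≤ ((L : ℝ) * |B ω - μ0|)^2 := this
        _ = (L : ℝ)^2 * (B ω - μ0)^2 := by rw [mul_pow, sq_abs]
    nlinarith [key, hq1, hq2, sq_nonneg (|f (A ω) - f μ0| - |f (B ω) - f μ0|)]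
  calc ∫ ω, (f (A ω) - f (B ω))^2 ∂ℙ
      ≤ ∫ ω, (2 * (L : ℝ)^2 * (A ω - μ0)^2 + 2 * (L : ℝ)^2 * (B ω - μ0)^2) ∂ℙ := by
        refine integral_mono_of_nonneg (Filter.Eventually.of_forall fun ω => sq_nonneg _)
          ((hAint.const_mul _).add (hBint.const_mul _))
          (Filter.Eventually.of_forall hpt)
    _ = 2 * (L : ℝ)^2 * ((M : ℝ)⁻¹ * variance Z₀ ℙ)
        + 2 * (L : ℝ)^2 * ((N : ℝ)⁻¹ * variance Z₀ ℙ) := by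
        rw [integral_add (hAint.const_mul _) (hBint.const_mul _),
          integral_const_mul, integral_const_mul, hAsq, hBsq]
    _ = 2 * (L : ℝ)^2 * ((M : ℝ)⁻¹ + (N : ℝ)⁻¹) * variance Z₀ ℙ := by ring
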